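/- arXiv:0803.2629 — 2 statements merged into one kernel-verified Lean document; each statement's English description precedes it below -/
import Mathlib

section
/- Let p be a prime number, let u ∈ ℂ^p, and let û = F_p u be its discrete Fourier transform. If u ≠ 0, then |supp(u)| + |supp(û)| ≥ p + 1. -/
open scoped BigOperators
open scoped Matrix
open Polynomial


/-- helper: coefficient of `X * derivative f`. -/
lemma coeff_X_mul_derivative {R : Type*} [CommRing R] (f : R[X]) (m : ℕ) :
    (X * derivative f).coeff m = f.coeff m * m := by
  cases m with
  | zero => simp
  | succ k => rw [coeff_X_mul, coeff_derivative]; push_cast; ring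

/-- Key char-p lemma: a nonzero polynomial over `ZMod p` with fewer than `n+1` nonzero
terms and degree `< p` is not divisible by `(X-1)^n`. -/
lemma sparse_not_dvd (p : ℕ) (hp : p.Prime) :
    ∀ (n : ℕ) (f : (ZMod p)[X]), f ≠ 0 → f.natDegree < p → f.support.card ≤ n →
      ¬ ((X - 1 : (ZMod p)[X]) ^ n ∣ f) := by
  haveI : Fact p.Prime := ⟨hp⟩
  intro n
  induction n with
  | zero =>
    intro f hf hd hc _
    exact hf (Polynomial.support_eq_empty.mp (Finset.card_eq_zero.mp (Nat.le_zero.mp hc)))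
  | succ n ih =>
    intro f hf hd hc hdvd
    have hf1 : f.eval 1 = 0 := by
      obtain ⟨g, hg⟩ := hdvd
      rw [hg]; simp
    rcases Nat.lt_or_ge f.support.card 2 with hcard | hcard
    · -- single term
      have h1 : f.support.card = 1 := by
        have h0 : f.support.card ≠ 0 := by
          simpa [Finset.card_eq_zero, Polynomial.support_eq_empty] using hf
        omega
      obtain ⟨k, x, hx, rfl⟩ := Polynomial.card_support_eq_one.mp h1
      simp at hf1
      exact hx hf1
    · -- at least two terms
      set k := f.natTrailingDegree with hk
      have hkmem : k ∈ f.support := Polynomial.natTrailingDegree_mem_support_of_nonzero hf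
      obtain ⟨m, hm, hmk⟩ : ∃ m ∈ f.support, m ≠ k := by
        by_contra h
        push_neg at h
        have : f.support ⊆ {k} := fun x hx => Finset.mem_singleton.mpr (h x hx)
        have := Finset.card_le_card this
        simp at this; omega
      set g : (ZMod p)[X] := X * derivative f - C (k : ZMod p) * f with hg
      have hgcoeff : ∀ j, g.coeff j = f.coeff j * ((j : ZMod p) - (k : ZMod p)) := by
        intro j
        rw [hg, Polynomial.coeff_sub, coeff_X_mul_derivative, Polynomial.coeff_C_mul]
        ring
      have castne : ∀ j ∈ f.support, j ≠ k → ((j : ZMod p) - (k : ZMod p)) ≠ 0 := by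
        intro j hj hjk
        have hjd : j ≤ f.natDegree := Polynomial.le_natDegree_of_mem_supp j hj
        have hkj : k ≤ j := Polynomial.natTrailingDegree_le_of_mem_supp j hj
        have h1 : (j : ZMod p) - (k : ZMod p) = ((j - k : ℕ) : ZMod p) := by
          push_cast [Nat.cast_sub hkj]; ring
        rw [h1, Ne, ZMod.natCast_eq_zero_iff]
        intro hdvd'
        have : j - k = 0 := Nat.eq_zero_of_dvd_of_lt hdvd' (by omega) |> fun h => absurd h (by omega)
        omega
      have hgne : g ≠ 0 := by
        intro h0
        have := hgcoeff m
        rw [h0, Polynomial.coeff_zero] at this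
        exact castne m hm hmk (by
          rcases mul_eq_zero.mp this.symm with h | h
          · exact absurd h (Polynomial.mem_support_iff.mp hm)
          · exact h)
      have hsub : g.support ⊆ f.support.erase k := by
        intro j hj
        rw [Polynomial.mem_support_iff] at hj
        rw [hgcoeff] at hj
        have hfj : f.coeff j ≠ 0 := fun h => hj (by rw [h, zero_mul])
        refine Finset.mem_erase.mpr ⟨?_, Polynomial.mem_support_iff.mpr hfj⟩
        intro hjk
        subst hjk
        simp at hj
      have hgdeg : g.natDegree < p := by
        have h1 : (X * derivative f).natDegree ≤ f.natDegree := by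
          rcases eq_or_ne (derivative f) 0 with h | h
          · simp [h]
          · have := Polynomial.natDegree_mul_le (p := (X : (ZMod p)[X])) (q := derivative f)
            have h2 := Polynomial.natDegree_derivative_le f
            have h3 : (X : (ZMod p)[X]).natDegree ≤ 1 := Polynomial.natDegree_X_le
            have hfd : 1 ≤ f.natDegree := by
              by_contra hfd
              push_neg at hfd
              interval_cases h' : f.natDegree
              · have : f.support ⊆ {0} := by
                  intro x hx
                  have := Polynomial.le_natDegree_of_mem_supp x hx
                  simpa using by omega
                have := Finset.card_le_card this
                simp at this; omega
            omega
        have h2 : (C (k : ZMod p) * f).natDegree ≤ f.natDegree :=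
          Polynomial.natDegree_mul_le.trans (by simp)
        calc g.natDegree ≤ max (X * derivative f).natDegree (C (k : ZMod p) * f).natDegree :=
              Polynomial.natDegree_sub_le _ _
          _ < p := by omega
      have hgcard : g.support.card ≤ n := by
        have := Finset.card_le_card hsub
        rw [Finset.card_erase_of_mem hkmem] at this
        omega
      have hgdvd : (X - 1 : (ZMod p)[X]) ^ n ∣ g := by
        obtain ⟨h, hh⟩ := hdvd
        have hd1 : (X - 1 : (ZMod p)[X]) ^ n ∣ f := by
          rw [hh]; exact Dvd.dvd.mul_right (pow_dvd_pow _ (Nat.le_succ n)) h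
        have hd2 : (X - 1 : (ZMod p)[X]) ^ n ∣ derivative f := by
          rw [hh, Polynomial.derivative_mul, Polynomial.derivative_pow]
          refine dvd_add (Dvd.dvd.mul_right ?_ _) (Dvd.dvd.mul_right (pow_dvd_pow _ (Nat.le_succ n)) _)
          simp only [Polynomial.derivative_sub, Polynomial.derivative_X, Polynomial.derivative_one,
            sub_zero, mul_one]
          exact Dvd.dvd.mul_left (dvd_refl _) _
        exact dvd_sub (Dvd.dvd.mul_left hd2 _) (Dvd.dvd.mul_left hd1 _)
      exact ih g hgne hgdeg hgcard hgdvd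


noncomputable section

set_option maxHeartbeats 2000000 in
theorem chebotarev (p : ℕ) (hp : p.Prime) (n : ℕ) (a b : Fin n → ZMod p)
    (ha : Function.Injective a) (hb : Function.Injective b) :
    (Matrix.of fun i j : Fin n =>
      Complex.exp (2 * Real.pi * Complex.I / p) ^ ((a i).val * (b j).val)).det ≠ 0 := by
  haveI : Fact p.Prime := ⟨hp⟩
  set ζ : ℂ := Complex.exp (2 * Real.pi * Complex.I / p) with hζdef
  have hζ : IsPrimitiveRoot ζ p := Complex.isPrimitiveRoot_exp p hp.ne_zero
  set Φ : ℤ[X] := cyclotomic p ℤ with hΦdef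
  have hΦirr : Irreducible Φ := cyclotomic.irreducible hp.pos
  have hΦprime : Prime Φ := hΦirr.prime
  set I : Ideal ℤ[X] := Ideal.span {Φ} with hIdef
  haveI hIprime : I.IsPrime := (Ideal.span_singleton_prime hΦprime.ne_zero).mpr hΦprime
  set S := ℤ[X] ⧸ I with hSdef
  haveI : IsDomain S := Ideal.Quotient.isDomain I
  -- the map to ℂ
  have hker : ∀ q : ℤ[X], q ∈ I → (aeval ζ q : ℂ) = 0 := by
    intro q hq
    rw [hIdef, Ideal.mem_span_singleton] at hq
    obtain ⟨c, rfl⟩ := hq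
    rw [map_mul]
    have : (aeval ζ Φ : ℂ) = 0 := by
      rw [hΦdef, aeval_def, eval₂_eq_eval_map, map_cyclotomic]
      exact (hζ.isRoot_cyclotomic hp.pos).eq_zero
    rw [this, zero_mul]
  set ι : S →+* ℂ := Ideal.Quotient.lift I (aeval ζ : ℤ[X] →ₐ[ℤ] ℂ).toRingHom hker with hιdef
  have hιmk : ∀ q : ℤ[X], ι (Ideal.Quotient.mk I q) = aeval ζ q := fun q => rfl
  have hιinj : Function.Injective ι := by
    rw [injective_iff_map_eq_zero]
    intro s hs
    obtain ⟨q, rfl⟩ := Ideal.Quotient.mk_surjective s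
    rw [hιmk] at hs
    have hint : IsIntegral ℤ ζ := hζ.isIntegral hp.pos
    have hdvd : minpoly ℤ ζ ∣ q := minpoly.isIntegrallyClosed_dvd hint hs
    rw [← cyclotomic_eq_minpoly hζ hp.pos] at hdvd
    rw [Ideal.Quotient.eq_zero_iff_mem, hIdef, Ideal.mem_span_singleton]
    exact hdvd
  -- the map to ZMod p
  have hker2 : ∀ q : ℤ[X], q ∈ I →
      (eval₂RingHom (Int.castRingHom (ZMod p)) 1 q : ZMod p) = 0 := by
    intro q hq
    rw [hIdef, Ideal.mem_span_singleton] at hq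
    obtain ⟨c, rfl⟩ := hq
    rw [map_mul]
    have : (eval₂RingHom (Int.castRingHom (ZMod p)) 1 Φ : ZMod p) = 0 := by
      rw [coe_eval₂RingHom, eval₂_eq_eval_map, hΦdef, map_cyclotomic]
      have := Polynomial.eval_one_cyclotomic_prime (R := ZMod p) (p := p)
      rw [this, ZMod.natCast_self]
    rw [this, zero_mul]
  set φ : S →+* ZMod p :=
    Ideal.Quotient.lift I (eval₂RingHom (Int.castRingHom (ZMod p)) 1) hker2 with hφdef
  have hφmk : ∀ q : ℤ[X], φ (Ideal.Quotient.mk I q) = eval₂ (Int.castRingHom (ZMod p)) 1 q :=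
    fun q => rfl
  set ω : S := Ideal.Quotient.mk I X with hωdef
  have hιω : ι ω = ζ := by rw [hωdef, hιmk]; simp
  have hφω : φ ω = 1 := by rw [hωdef, hφmk]; simp
  set t : S := ω - 1 with htdef
  have htne : t ≠ 0 := by
    intro h
    have : ι t = 0 := by rw [h, map_zero]
    rw [htdef, map_sub, hιω, map_one, sub_eq_zero] at this
    exact hζ.ne_one hp.one_lt this
  have htnu : ¬ IsUnit t := by
    intro h
    have : IsUnit (φ t) := h.map φ
    rw [htdef, map_sub, hφω, map_one, sub_self] at this
    exact not_isUnit_zero this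
  -- key: φ s = 0 → t ∣ s
  have hkey : ∀ s : S, φ s = 0 → t ∣ s := by
    intro s hs
    obtain ⟨q, rfl⟩ := Ideal.Quotient.mk_surjective s
    rw [hφmk, eval₂_eq_eval_map, Polynomial.eval_one_map] at hs
    -- hs : ((q.eval 1 : ℤ) : ZMod p) = 0
    have hpdvd : (p : ℤ) ∣ q.eval 1 := (ZMod.intCast_zmod_eq_zero_iff_dvd _ p).mp hs
    obtain ⟨m, hm⟩ := hpdvd
    -- t ∣ (p : S)
    have hC1 : Ideal.Quotient.mk I (C (1:ℤ)) = 1 := by simp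
    have htp : t ∣ ((p : ℤ) : S) := by
      obtain ⟨g, hg⟩ : (X - C (1:ℤ)) ∣ Φ - C (Φ.eval 1) := X_sub_C_dvd_sub_C_eval
      have hΦ1 : Φ.eval 1 = (p : ℤ) := by
        rw [hΦdef]
        exact_mod_cast Polynomial.eval_one_cyclotomic_prime (R := ℤ) (p := p)
      have hmkΦ : Ideal.Quotient.mk I Φ = 0 := by
        rw [Ideal.Quotient.eq_zero_iff_mem, hIdef]
        exact Ideal.subset_span rfl
      have h2 : Ideal.Quotient.mk I (C ((p : ℤ))) = ((p:ℤ) : S) := by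
        rw [eq_intCast Polynomial.C, map_intCast]
      have := congrArg (Ideal.Quotient.mk I) hg
      rw [map_sub, hmkΦ, hΦ1, zero_sub, map_mul, map_sub, h2, hC1] at this
      refine ⟨-(Ideal.Quotient.mk I g), ?_⟩
      rw [htdef, hωdef]
      linear_combination -this
    -- decompose q
    obtain ⟨g, hg⟩ : (X - C (1:ℤ)) ∣ q - C (q.eval 1) := X_sub_C_dvd_sub_C_eval
    have hCq : Ideal.Quotient.mk I (C (q.eval 1)) = ((q.eval 1 : ℤ) : S) := by
      rw [eq_intCast Polynomial.C, map_intCast]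
    have := congrArg (Ideal.Quotient.mk I) hg
    rw [map_sub, map_mul, map_sub, hCq, hC1] at this
    have h1 : Ideal.Quotient.mk I q =
        t * (Ideal.Quotient.mk I g) + ((q.eval 1 : ℤ) : S) := by
      rw [htdef, hωdef]
      linear_combination this
    rw [h1]
    refine dvd_add (Dvd.intro _ rfl) ?_
    rw [hm]
    push_cast
    convert Dvd.dvd.mul_right htp (m : S) using 1
    exact Int.cast_mul _ _
  classical
  -- the matrix over S
  set N : Matrix (Fin n) (Fin n) S := Matrix.of (fun i j => ω ^ ((a i).val * (b j).val))
    with hNdef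
  intro hdetC
  have hdetN : N.det = 0 := by
    apply hιinj
    rw [RingHom.map_det, map_zero]
    convert hdetC using 2
    ext i j
    rw [RingHom.mapMatrix_apply, Matrix.map_apply, hNdef, Matrix.of_apply, Matrix.of_apply,
      map_pow, hιω]
  -- Noetherian / WfDvd
  haveI : IsNoetherianRing S := by
    exact inferInstanceAs (IsNoetherianRing (ℤ[X] ⧸ I))
  haveI : WfDvdMonoid S := IsNoetherianRing.wfDvdMonoid
  -- generic coefficient computation
  have coeff_gen : ∀ {R : Type} [inst : CommRing R] (c : Fin n → R) (j : Fin n),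
      (∑ j' : Fin n, Polynomial.C (c j') * X ^ (b j').val).coeff (b j).val = c j := by
    intro R _ c j
    rw [Polynomial.finset_sum_coeff]
    rw [Finset.sum_eq_single j]
    · rw [Polynomial.coeff_C_mul, Polynomial.coeff_X_pow, if_pos rfl, mul_one]
    · intro j'' _ hne
      rw [Polynomial.coeff_C_mul, Polynomial.coeff_X_pow, if_neg, mul_zero]
      intro hval
      exact hne (hb (ZMod.val_injective p hval.symm))
    · intro h; exact absurd (Finset.mem_univ _) h
  have coeff_zero_out : ∀ {R : Type} [inst : CommRing R] (c : Fin n → R) (m : ℕ),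
      (m ∉ Finset.univ.image (fun j' => (b j').val)) →
      (∑ j' : Fin n, Polynomial.C (c j') * X ^ (b j').val).coeff m = 0 := by
    intro R _ c m hm
    rw [Polynomial.finset_sum_coeff]
    apply Finset.sum_eq_zero
    intro j' _
    rw [Polynomial.coeff_C_mul, Polynomial.coeff_X_pow, if_neg, mul_zero]
    intro h
    exact hm (Finset.mem_image.mpr ⟨j', Finset.mem_univ _, h.symm⟩)
  -- step : relations imply divisibility of all coordinates by t
  have step : ∀ c : Fin n → S, N *ᵥ c = 0 → ∀ j, t ∣ c j := by
    intro c hvc j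
    by_contra hndvd
    have hφcj : φ (c j) ≠ 0 := fun h => hndvd (hkey _ h)
    have hcj : c j ≠ 0 := fun h => hφcj (by rw [h, map_zero])
    -- polynomial over ZMod p
    set f : (ZMod p)[X] := ∑ j' : Fin n, Polynomial.C (φ (c j')) * X ^ (b j').val with hfdef
    have hfne : f ≠ 0 := fun h =>
      hφcj (by rw [← coeff_gen (fun j' => φ (c j')) j, ← hfdef, h, Polynomial.coeff_zero])
    have hsupp : f.support ⊆ Finset.univ.image (fun j' => (b j').val) := by
      intro m hm
      rw [Polynomial.mem_support_iff] at hm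
      by_contra hmem
      exact hm (by rw [hfdef]; exact coeff_zero_out _ m hmem)
    have hcard : f.support.card ≤ n := by
      refine le_trans (Finset.card_le_card hsupp) (le_trans Finset.card_image_le ?_)
      simp
    have hdeg : f.natDegree < p := by
      have hmem := Polynomial.natDegree_mem_support_of_nonzero hfne
      obtain ⟨j', _, hj'⟩ := Finset.mem_image.mp (hsupp hmem)
      rw [← hj']
      exact ZMod.val_lt _
    -- polynomial over S
    set F : S[X] := ∑ j' : Fin n, Polynomial.C (c j') * X ^ (b j').val with hFdef
    have hFne : F ≠ 0 := fun h =>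
      hcj (by rw [← coeff_gen c j, ← hFdef, h, Polynomial.coeff_zero])
    have hFroot : ∀ i, F.IsRoot (ω ^ (a i).val) := by
      intro i
      have hsum : ∑ j' : Fin n, N i j' * c j' = 0 := by
        have := congrFun hvc i
        simpa [Matrix.mulVec, dotProduct] using this
      rw [Polynomial.IsRoot, hFdef, Polynomial.eval_finset_sum]
      rw [← hsum]
      apply Finset.sum_congr rfl
      intro j' _
      rw [Polynomial.eval_mul, Polynomial.eval_C, Polynomial.eval_pow, Polynomial.eval_X,
        ← pow_mul, hNdef, Matrix.of_apply, mul_comm]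
    set r : Fin n → S := fun i => ω ^ (a i).val with hrdef
    have hrinj : Function.Injective r := by
      intro i i' h
      have h2 : ζ ^ (a i).val = ζ ^ (a i').val := by
        have := congrArg ι h
        rwa [hrdef, map_pow, map_pow, hιω] at this
      exact ha (ZMod.val_injective p (hζ.pow_inj (ZMod.val_lt _) (ZMod.val_lt _) h2))
    have hle : (Finset.univ.val.map r) ≤ F.roots := by
      rw [Multiset.le_iff_count]
      intro x
      by_cases hx : x ∈ Finset.univ.val.map r
      · obtain ⟨i, _, rfl⟩ := Multiset.mem_map.mp hx
        have hnodup : (Finset.univ.val.map r).Nodup :=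
          Finset.univ.nodup.map hrinj
        rw [Multiset.count_eq_one_of_mem hnodup hx, Polynomial.count_roots]
        exact (Polynomial.rootMultiplicity_pos hFne).mpr (hFroot i)
      · rw [Multiset.count_eq_zero_of_notMem hx]
        exact Nat.zero_le _
    have hdvdF : (∏ i : Fin n, (X - Polynomial.C (r i))) ∣ F := by
      have h2 := Multiset.prod_dvd_prod_of_le
        (Multiset.map_le_map (f := fun a => (X : S[X]) - Polynomial.C a) hle)
      refine dvd_trans (dvd_of_eq ?_) (h2.trans F.prod_multiset_X_sub_C_dvd)
      rw [Finset.prod_eq_multiset_prod, Multiset.map_map]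
      rfl
    -- push to ZMod p
    have hmapF : Polynomial.map φ F = f := by
      rw [hFdef, hfdef, Polynomial.map_sum]
      apply Finset.sum_congr rfl
      intro j' _
      rw [Polynomial.map_mul, Polynomial.map_C, Polynomial.map_pow, Polynomial.map_X]
    have hmapP : Polynomial.map φ (∏ i : Fin n, (X - Polynomial.C (r i)))
        = (X - 1 : (ZMod p)[X]) ^ n := by
      rw [Polynomial.map_prod]
      have : ∀ i : Fin n, Polynomial.map φ ((X : S[X]) - Polynomial.C (r i))
          = (X - 1 : (ZMod p)[X]) := by
        intro i
        rw [Polynomial.map_sub, Polynomial.map_X, Polynomial.map_C, hrdef, map_pow, hφω,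
          one_pow, Polynomial.C_1]
      rw [Finset.prod_congr rfl (fun i _ => this i), Finset.prod_const, Finset.card_univ,
        Fintype.card_fin]
    have hfinal : (X - 1 : (ZMod p)[X]) ^ n ∣ f := by
      have := Polynomial.map_dvd φ hdvdF
      rwa [hmapF, hmapP] at this
    exact sparse_not_dvd p hp n f hfne hdeg hcard hfinal
  -- iterate divisibility
  have pows : ∀ (m : ℕ) (c : Fin n → S), N *ᵥ c = 0 → ∀ j, t ^ m ∣ c j := by
    intro m
    induction m with
    | zero => intro c _ j; simp
    | succ m ih =>
      intro c hvc j
      have hdvd := step c hvc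
      choose d hd using hdvd
      have hvd : N *ᵥ d = 0 := by
        funext i
        have h0 : ∑ j', N i j' * c j' = 0 := by
          simpa [Matrix.mulVec, dotProduct] using congrFun hvc i
        have h1 : (N *ᵥ d) i = ∑ j', N i j' * d j' := by
          simp [Matrix.mulVec, dotProduct]
        rw [h1, Pi.zero_apply]
        apply mul_left_cancel₀ htne
        rw [mul_zero, Finset.mul_sum, ← h0]
        apply Finset.sum_congr rfl
        intro j' _
        rw [hd j']
        ring
      rw [hd j, pow_succ, mul_comm (t ^ m) t]
      exact mul_dvd_mul_left t (ih d hvd j)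
  -- conclude
  obtain ⟨c, hc0, hvc⟩ := Matrix.exists_mulVec_eq_zero_iff.mpr hdetN
  obtain ⟨j0, hj0⟩ : ∃ j, c j ≠ 0 := by
    by_contra h
    push_neg at h
    exact hc0 (funext h)
  obtain ⟨k, d, hnd, hcd⟩ := WfDvdMonoid.max_power_factor' hj0 htnu
  have hdd := pows (k + 1) c hvc j0
  rw [hcd, pow_succ] at hdd
  exact hnd ((mul_dvd_mul_iff_left (pow_ne_zero k htne)).mp hdd)

end

/-- The discrete Fourier transform on `ℂ^p`:
`û_j = (1/√p) ∑_{k=0}^{p-1} e^{2πi jk/p} u_k`. -/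
noncomputable def dft (p : ℕ) [NeZero p] (u : ZMod p → ℂ) : ZMod p → ℂ := fun j =>
  (1 / (Real.sqrt p : ℂ)) * ∑ k : ZMod p,
    Complex.exp (2 * (Real.pi : ℂ) * Complex.I * (j.val : ℂ) * (k.val : ℂ) / (p : ℂ)) * u k

/-- For `p` prime and `u ∈ ℂ^p`, `u ≠ 0`, the supports of `u` and of its Fourier transform
`û` satisfy `|supp(u)| + |supp(û)| ≥ p + 1`. -/
theorem support_add_support_dft (p : ℕ) (hp : p.Prime) [NeZero p]
    (u : ZMod p → ℂ) (hu : u ≠ 0) :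
    p + 1 ≤ (Finset.univ.filter fun i : ZMod p => u i ≠ 0).card +
      (Finset.univ.filter fun i : ZMod p => dft p u i ≠ 0).card := by
  classical
  by_contra hcon
  push_neg at hcon
  set A : Finset (ZMod p) := Finset.univ.filter (fun i : ZMod p => u i ≠ 0) with hAdef
  set D : Finset (ZMod p) := Finset.univ.filter (fun i : ZMod p => dft p u i ≠ 0) with hDdef
  set Z : Finset (ZMod p) := Finset.univ.filter (fun i : ZMod p => dft p u i = 0) with hZdef
  have hDZ : D.card + Z.card = p := by
    have h1 := Finset.card_filter_add_card_filter_not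
      (s := (Finset.univ : Finset (ZMod p))) (p := fun i => dft p u i ≠ 0)
    rw [Finset.card_univ, ZMod.card] at h1
    have h2 : (Finset.univ.filter (fun i : ZMod p => ¬ dft p u i ≠ 0)) = Z := by
      rw [hZdef]
      apply Finset.filter_congr
      intro x _
      simp
    rw [h2] at h1
    exact h1
  set n : ℕ := A.card with hndef
  have hnpos : 0 < n := by
    rw [hndef, Finset.card_pos]
    obtain ⟨k, hk⟩ := Function.ne_iff.mp hu
    refine ⟨k, ?_⟩
    rw [hAdef, Finset.mem_filter]
    exact ⟨Finset.mem_univ _, by simpa using hk⟩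
  have hnZ : n ≤ Z.card := by omega
  obtain ⟨T, hTZ, hTcard⟩ := Finset.exists_subset_card_eq hnZ
  -- enumerations
  set eT : {x // x ∈ T} ≃ Fin n := Finset.equivFinOfCardEq hTcard with heTdef
  set eA : {x // x ∈ A} ≃ Fin n := Finset.equivFinOfCardEq rfl with heAdef
  set a : Fin n → ZMod p := fun i => ((eT.symm i : {x // x ∈ T}) : ZMod p) with hadef
  set b : Fin n → ZMod p := fun j => ((eA.symm j : {x // x ∈ A}) : ZMod p) with hbdef
  have hainj : Function.Injective a := by
    intro i j h
    exact eT.symm.injective (Subtype.ext h)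
  have hbinj : Function.Injective b := by
    intro i j h
    exact eA.symm.injective (Subtype.ext h)
  have haT : ∀ i, a i ∈ T := fun i => (eT.symm i).2
  have hbA : ∀ j, b j ∈ A := fun j => (eA.symm j).2
  have hbu : ∀ j, u (b j) ≠ 0 := by
    intro j
    have := hbA j
    rw [hAdef, Finset.mem_filter] at this
    exact this.2
  set ζ : ℂ := Complex.exp (2 * Real.pi * Complex.I / p) with hζdef
  -- the matrix and kernel vector
  set M : Matrix (Fin n) (Fin n) ℂ :=
    Matrix.of (fun i j : Fin n => ζ ^ ((a i).val * (b j).val)) with hMdef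
  set c : Fin n → ℂ := fun j => u (b j) with hcdef
  have hc0 : c ≠ 0 := fun h => hbu ⟨0, hnpos⟩ (by simpa using congrFun h ⟨0, hnpos⟩)
  have hMc : M *ᵥ c = 0 := by
    funext i
    have hdfti : dft p u (a i) = 0 := by
      have := hTZ (haT i)
      rw [hZdef, Finset.mem_filter] at this
      exact this.2
    have hsqrt : (1 / (Real.sqrt p : ℂ)) ≠ 0 := by
      rw [ne_eq, one_div, inv_eq_zero]
      exact_mod_cast Real.sqrt_ne_zero'.mpr (by exact_mod_cast hp.pos)
    rw [dft] at hdfti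
    have hsum : ∑ k : ZMod p,
        Complex.exp (2 * (Real.pi : ℂ) * Complex.I * ((a i).val : ℂ) * (k.val : ℂ) / (p : ℂ))
          * u k = 0 := by
      rcases mul_eq_zero.mp hdfti with h | h
      · exact absurd h hsqrt
      · exact h
    -- restrict to A
    have hsum2 : ∑ k ∈ A,
        Complex.exp (2 * (Real.pi : ℂ) * Complex.I * ((a i).val : ℂ) * (k.val : ℂ) / (p : ℂ))
          * u k = 0 := by
      rw [← hsum]
      apply Finset.sum_subset (Finset.subset_univ A)
      intro k _ hk
      have : u k = 0 := by
        by_contra h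
        exact hk (by rw [hAdef]; simp [h])
      rw [this, mul_zero]
    -- reindex by b
    have hsum3 : ∑ j : Fin n,
        Complex.exp (2 * (Real.pi : ℂ) * Complex.I * ((a i).val : ℂ) * (((b j).val : ℕ) : ℂ)
          / (p : ℂ)) * u (b j) = 0 := by
      rw [← hsum2]
      rw [← Finset.sum_coe_sort A]
      exact Fintype.sum_equiv eA.symm _ _ (fun j => rfl)
    have hexp : ∀ j : Fin n,
        Complex.exp (2 * (Real.pi : ℂ) * Complex.I * ((a i).val : ℂ) * (((b j).val : ℕ) : ℂ)
          / (p : ℂ)) = ζ ^ ((a i).val * (b j).val) := by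
      intro j
      rw [hζdef, ← Complex.exp_nat_mul]
      congr 1
      push_cast
      ring
    have : (M *ᵥ c) i = ∑ j : Fin n, ζ ^ ((a i).val * (b j).val) * u (b j) := by
      simp [Matrix.mulVec, dotProduct, hMdef, hcdef]
    rw [this, Pi.zero_apply, ← hsum3]
    apply Finset.sum_congr rfl
    intro j _
    rw [hexp j]
  have hdet : M.det = 0 :=
    Matrix.exists_mulVec_eq_zero_iff.mp ⟨c, hc0, hMc⟩
  exact chebotarev p hp n a b hainj hbinj hdet
end

section
/- Let p be a prime number and let φ : ℂ^{2p−2} → ℂ^{2p−2} be given by φ_j(x', y') = x_j y_j and φ_{p−1+j}(x', y') = x̂_j ŷ_{−j} for 1 ≤ j ≤ p−1, where x = (1, x_1, …, x_{p−1}) and y = (1, y_1, …, y_{p−1}). Then: (i) for every solution z = (x_1, …, x_{p−1}, y_1, …, y_{p−1}) of φ(z) = 0, there is a unique pair (K, L) of subsets of ℤ_p* = {1, …, p−1} with |K| + |L| = p−1 such that supp(x) = L ∪ {0}, supp(x̂) = K ∪ {0}, supp(y) = ℤ_p \ L, and −supp(ŷ) = ℤ_p \ K; (ii) conversely, for every pair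 (K, L) of subsets of ℤ_p* with |K| + |L| = p−1, there exists exactly one pair (x, y) ∈ ℂ^p × ℂ^p of the form x = (1, x_1, …, x_{p−1}), y = (1, y_1, …, y_{p−1}) satisfying these four support conditions, and for this pair, z = (x_1, …, x_{p−1}, y_1, …, y_{p−1}) satisfies φ(z) = 0. -/
open scoped BigOperators

set_option linter.unusedSectionVars false
set_option linter.unusedTactic false
set_option maxHeartbeats 1000000

open Polynomial Finset

lemma prod_range_sub_eq (N k : ℕ) :
    ∏ t ∈ Finset.range k, ((N : ℤ) - t) = (k.factorial : ℤ) * N.choose k := by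
  induction k with
  | zero => simp
  | succ k ih =>
    rw [Finset.prod_range_succ, ih]
    rcases lt_or_ge N k with h | h
    · rw [Nat.choose_eq_zero_of_lt h, Nat.choose_eq_zero_of_lt (by omega)]
      simp
    · have h1 := Nat.choose_succ_right_eq N k
      have : ((N : ℤ) - k) = ((N - k : ℕ) : ℤ) := by push_cast; omega
      rw [this]
      push_cast [Nat.factorial_succ]
      nlinarith [h1, (0:ℤ) ≤ 1]

-- sum of distinct naturals
lemma sum_card_le_sum (s : Finset ℕ) : ∑ x ∈ Finset.range s.card, x ≤ ∑ x ∈ s, x := by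
  induction s using Finset.strongInduction with
  | _ s ih =>
    rcases s.eq_empty_or_nonempty with rfl | hs
    · simp
    · have hmax := s.max'_mem hs
      have hcard : (s.erase (s.max' hs)).card = s.card - 1 := by
        rw [Finset.card_erase_of_mem hmax]
      have h1 : s.card - 1 ≤ s.max' hs := by
        by_contra h
        push_neg at h
        have : s ⊆ Finset.range (s.max' hs + 1) := fun x hx =>
          Finset.mem_range.2 (by have := Finset.le_max' s x hx; omega)
        have := Finset.card_le_card this
        simp at this; omega
      have ih' := ih (s.erase (s.max' hs)) (Finset.erase_ssubset hmax)
      rw [hcard] at ih'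
      have hins : s = insert (s.max' hs) (s.erase (s.max' hs)) := by
        rw [Finset.insert_erase hmax]
      have hsplit : ∑ x ∈ s, x = s.max' hs + ∑ x ∈ s.erase (s.max' hs), x := by
        conv_lhs => rw [hins]
        rw [Finset.sum_insert (Finset.notMem_erase _ _)]
      have hc1 : s.card = (s.card - 1) + 1 := by
        have := Finset.card_pos.2 hs; omega
      rw [hc1, Finset.sum_range_succ, hsplit]
      omega

lemma eq_range_of_sum_eq (s : Finset ℕ) (h : ∑ x ∈ s, x = ∑ x ∈ Finset.range s.card, x) :
    s = Finset.range s.card := by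
  induction s using Finset.strongInduction with
  | _ s ih =>
    rcases s.eq_empty_or_nonempty with rfl | hs
    · simp
    · have hmax := s.max'_mem hs
      have hcard : (s.erase (s.max' hs)).card = s.card - 1 := Finset.card_erase_of_mem hmax
      have h1 : s.card - 1 ≤ s.max' hs := by
        by_contra h'
        push_neg at h'
        have : s ⊆ Finset.range (s.max' hs + 1) := fun x hx =>
          Finset.mem_range.2 (by have := Finset.le_max' s x hx; omega)
        have := Finset.card_le_card this
        simp at this; omega
      have ihle := sum_card_le_sum (s.erase (s.max' hs))
      rw [hcard] at ihle
      have hins : s = insert (s.max' hs) (s.erase (s.max' hs)) := (Finset.insert_erase hmax).symm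
      have hc1 : s.card = (s.card - 1) + 1 := by have := Finset.card_pos.2 hs; omega
      have hsplit : ∑ x ∈ s, x = s.max' hs + ∑ x ∈ s.erase (s.max' hs), x := by
        conv_lhs => rw [hins]
        rw [Finset.sum_insert (Finset.notMem_erase _ _)]
      rw [hsplit, hc1, Finset.sum_range_succ] at h
      have hmaxeq : s.max' hs = s.card - 1 := by omega
      have hsum' : ∑ x ∈ s.erase (s.max' hs), x = ∑ x ∈ Finset.range (s.card - 1), x := by omega
      have := ih (s.erase (s.max' hs)) (Finset.erase_ssubset hmax)
      rw [hcard] at this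
      have herase := this hsum'
      rw [hc1, Finset.range_add_one, ← herase, ← hmaxeq]
      exact hins

-- sum over permutations of signed products of powers: vanishing case
lemma sum_perm_zero {n : ℕ} (α : Fin n → ℤ) (k : Fin n → ℕ)
    (hk : ¬ Function.Injective k) :
    ∑ σ : Equiv.Perm (Fin n), ((Equiv.Perm.sign σ : ℤˣ) : ℤ) * ∏ i, α (σ i) ^ k i = 0 := by
  have hdet : ∑ σ : Equiv.Perm (Fin n), ((Equiv.Perm.sign σ : ℤˣ) : ℤ) * ∏ i, α (σ i) ^ k i
      = (Matrix.of fun x i => α x ^ k i).det := by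
    rw [Matrix.det_apply]
    exact Finset.sum_congr rfl fun σ _ => by rw [Units.smul_def, zsmul_eq_mul]; rfl
  rw [hdet]
  obtain ⟨i, j, hij, hne⟩ := Function.not_injective_iff.1 hk
  exact Matrix.det_zero_of_column_eq hne (fun x => by simp [hij])

-- permuted Vandermonde
lemma sum_perm_vdm {n : ℕ} (α : Fin n → ℤ) (g : Equiv.Perm (Fin n)) :
    ∑ σ : Equiv.Perm (Fin n), ((Equiv.Perm.sign σ : ℤˣ) : ℤ) * ∏ i, α (σ i) ^ ((g i : ℕ))
    = ((Equiv.Perm.sign g : ℤˣ) : ℤ) *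
      ∏ i : Fin n, ∏ j ∈ Finset.Ioi i, (α j - α i) := by
  have hdet : ∑ σ : Equiv.Perm (Fin n), ((Equiv.Perm.sign σ : ℤˣ) : ℤ) * ∏ i, α (σ i) ^ ((g i : ℕ))
      = ((Matrix.vandermonde α).submatrix id g).det := by
    rw [Matrix.det_apply]
    exact Finset.sum_congr rfl fun σ _ => by rw [Units.smul_def, zsmul_eq_mul]; rfl
  rw [hdet, Matrix.det_permute', Matrix.det_vandermonde]
  norm_cast

-- the other Vandermonde (exponent on the permutation side)
lemma sum_perm_vdm' {n : ℕ} (β : Fin n → ℤ) :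
    ∑ g : Equiv.Perm (Fin n), ((Equiv.Perm.sign g : ℤˣ) : ℤ) * ∏ i, β i ^ ((g i : ℕ))
    = ∏ i : Fin n, ∏ j ∈ Finset.Ioi i, (β j - β i) := by
  have hdet : ∑ g : Equiv.Perm (Fin n), ((Equiv.Perm.sign g : ℤˣ) : ℤ) * ∏ i, β i ^ ((g i : ℕ))
      = ((Matrix.vandermonde β).transpose).det := by
    rw [Matrix.det_apply]
    exact Finset.sum_congr rfl fun σ _ => by rw [Units.smul_def, zsmul_eq_mul]; rfl
  rw [hdet, Matrix.det_transpose, Matrix.det_vandermonde]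

-- injective functions Fin n → ℕ have sum at least 0+1+...+(n-1)
lemma sum_le_of_inj {n : ℕ} (k : Fin n → ℕ) (hk : Function.Injective k) :
    ∑ i : Fin n, (i : ℕ) ≤ ∑ i, k i := by
  have hcard : (Finset.univ.image k).card = n := by
    rw [Finset.card_image_of_injective _ hk, Finset.card_univ, Fintype.card_fin]
  have := sum_card_le_sum (Finset.univ.image k)
  rw [hcard] at this
  rw [Fin.sum_univ_eq_sum_range (fun i => i) n]
  calc ∑ i ∈ Finset.range n, i ≤ ∑ x ∈ Finset.univ.image k, x := this
    _ = ∑ i, k i := Finset.sum_image (fun a _ b _ h => hk h)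

-- an injective function with minimal sum is a permutation (of values 0..n-1)
lemma exists_perm_of_inj {n : ℕ} (k : Fin n → ℕ) (hk : Function.Injective k)
    (hsum : ∑ i, k i = ∑ i : Fin n, (i : ℕ)) :
    ∃ g : Equiv.Perm (Fin n), ∀ i, k i = ((g i : ℕ)) := by
  have hcard : (Finset.univ.image k).card = n := by
    rw [Finset.card_image_of_injective _ hk, Finset.card_univ, Fintype.card_fin]
  have himg : Finset.univ.image k = Finset.range n := by
    have h1 : ∑ x ∈ Finset.univ.image k, x = ∑ x ∈ Finset.range (Finset.univ.image k).card, x := by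
      rw [hcard, Finset.sum_image (fun a _ b _ h => hk h), hsum,
        Fin.sum_univ_eq_sum_range (fun i => i) n]
    have := eq_range_of_sum_eq _ h1
    rwa [hcard] at this
  have hlt : ∀ i, k i < n := fun i => by
    have : k i ∈ Finset.univ.image k := Finset.mem_image_of_mem k (Finset.mem_univ i)
    rw [himg, Finset.mem_range] at this
    exact this
  let k' : Fin n → Fin n := fun i => ⟨k i, hlt i⟩
  have hk' : Function.Injective k' := fun a b h => hk (congrArg Fin.val h)
  have hbij : Function.Bijective k' := Finite.injective_iff_bijective.1 hk'
  exact ⟨Equiv.ofBijective k' hbij, fun i => rfl⟩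

-- The power sums
lemma S_lt {n : ℕ} (α β : Fin n → ℤ) (t : ℕ) (ht : t < ∑ i : Fin n, (i : ℕ)) :
    ∑ σ : Equiv.Perm (Fin n), ((Equiv.Perm.sign σ : ℤˣ) : ℤ) * (∑ i, α (σ i) * β i) ^ t = 0 := by
  have expand : ∀ σ : Equiv.Perm (Fin n), (∑ i, α (σ i) * β i) ^ t
      = ∑ k ∈ Finset.piAntidiag Finset.univ t,
          (Nat.multinomial Finset.univ k : ℤ) * ((∏ i, β i ^ k i) * ∏ i, α (σ i) ^ k i) := by
    intro σ
    rw [Finset.sum_pow_eq_sum_piAntidiag]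
    refine Finset.sum_congr rfl fun k _ => ?_
    simp_rw [mul_pow]
    rw [Finset.prod_mul_distrib]
    ring
  simp_rw [expand, Finset.mul_sum]
  rw [Finset.sum_comm]
  refine Finset.sum_eq_zero fun k hk => ?_
  have hnoninj : ¬ Function.Injective k := by
    intro hinj
    have h1 := sum_le_of_inj k hinj
    have h2 : Finset.univ.sum k = t := (Finset.mem_piAntidiag.1 hk).1
    have h2' : ∑ i, k i = t := h2
    omega
  calc ∑ σ : Equiv.Perm (Fin n), ((Equiv.Perm.sign σ : ℤˣ) : ℤ) *
        ((Nat.multinomial Finset.univ k : ℤ) * ((∏ i, β i ^ k i) * ∏ i, α (σ i) ^ k i))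
      = (Nat.multinomial Finset.univ k : ℤ) * (∏ i, β i ^ k i) *
        ∑ σ : Equiv.Perm (Fin n), ((Equiv.Perm.sign σ : ℤˣ) : ℤ) * ∏ i, α (σ i) ^ k i := by
        rw [Finset.mul_sum]; exact Finset.sum_congr rfl fun σ _ => by ring
    _ = 0 := by rw [sum_perm_zero α k hnoninj, mul_zero]

lemma S_top {n : ℕ} (α β : Fin n → ℤ) :
    (∏ i : Fin n, ((i : ℕ).factorial : ℤ)) *
      ∑ σ : Equiv.Perm (Fin n), ((Equiv.Perm.sign σ : ℤˣ) : ℤ) *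
        (∑ i, α (σ i) * β i) ^ (∑ i : Fin n, (i : ℕ))
    = ((∑ i : Fin n, (i : ℕ)).factorial : ℤ) *
      ((∏ i : Fin n, ∏ j ∈ Finset.Ioi i, (α j - α i)) *
       (∏ i : Fin n, ∏ j ∈ Finset.Ioi i, (β j - β i))) := by
  set m := ∑ i : Fin n, (i : ℕ) with hm
  set Vα := ∏ i : Fin n, ∏ j ∈ Finset.Ioi i, (α j - α i) with hVα
  have expand : ∀ σ : Equiv.Perm (Fin n), (∑ i, α (σ i) * β i) ^ m
      = ∑ k ∈ Finset.piAntidiag Finset.univ m,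
          (Nat.multinomial Finset.univ k : ℤ) * ((∏ i, β i ^ k i) * ∏ i, α (σ i) ^ k i) := by
    intro σ
    rw [Finset.sum_pow_eq_sum_piAntidiag]
    refine Finset.sum_congr rfl fun k _ => ?_
    simp_rw [mul_pow]
    rw [Finset.prod_mul_distrib]
    ring
  have key : ∑ σ : Equiv.Perm (Fin n), ((Equiv.Perm.sign σ : ℤˣ) : ℤ) *
        (∑ i, α (σ i) * β i) ^ m
      = ∑ g : Equiv.Perm (Fin n), (Nat.multinomial Finset.univ (fun i => ((g i : ℕ))) : ℤ) *
          ((∏ i, β i ^ ((g i : ℕ))) * (((Equiv.Perm.sign g : ℤˣ) : ℤ) * Vα)) := by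
    simp_rw [expand, Finset.mul_sum]
    rw [Finset.sum_comm]
    have hval : ∀ k ∈ Finset.piAntidiag Finset.univ m,
        ∑ σ : Equiv.Perm (Fin n), ((Equiv.Perm.sign σ : ℤˣ) : ℤ) *
          ((Nat.multinomial Finset.univ k : ℤ) * ((∏ i, β i ^ k i) * ∏ i, α (σ i) ^ k i))
        = (Nat.multinomial Finset.univ k : ℤ) * (∏ i, β i ^ k i) *
          ∑ σ : Equiv.Perm (Fin n), ((Equiv.Perm.sign σ : ℤˣ) : ℤ) * ∏ i, α (σ i) ^ k i := by
      intro k _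
      rw [Finset.mul_sum]
      exact Finset.sum_congr rfl fun σ _ => by ring
    rw [Finset.sum_congr rfl hval]
    set T := Finset.univ.image (fun g : Equiv.Perm (Fin n) => (fun i => ((g i : ℕ)))) with hT
    have hTsub : T ⊆ Finset.piAntidiag Finset.univ m := by
      intro k hk
      rw [hT, Finset.mem_image] at hk
      obtain ⟨g, _, rfl⟩ := hk
      rw [Finset.mem_piAntidiag]
      exact ⟨Equiv.sum_comp g (fun i => (i : ℕ)), fun i _ => Finset.mem_univ i⟩
    have hzero : ∀ k ∈ Finset.piAntidiag Finset.univ m, k ∉ T →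
        (Nat.multinomial Finset.univ k : ℤ) * (∏ i, β i ^ k i) *
          ∑ σ : Equiv.Perm (Fin n), ((Equiv.Perm.sign σ : ℤˣ) : ℤ) * ∏ i, α (σ i) ^ k i = 0 := by
      intro k hk hkT
      have hnoninj : ¬ Function.Injective k := by
        intro hinj
        have hsum : Finset.univ.sum k = m := (Finset.mem_piAntidiag.1 hk).1
        obtain ⟨g, hg⟩ := exists_perm_of_inj k hinj hsum
        exact hkT (by
          rw [hT, Finset.mem_image]
          exact ⟨g, Finset.mem_univ g, (funext fun i => (hg i).symm)⟩)
      rw [sum_perm_zero α k hnoninj, mul_zero]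
    rw [← Finset.sum_subset hTsub hzero]
    have hinj : Function.Injective (fun g : Equiv.Perm (Fin n) => (fun i : Fin n => ((g i : ℕ)))) := by
      intro g1 g2 h
      ext i
      exact congrArg Fin.val (by exact Fin.val_injective (congrFun h i)) ▸
        Fin.val_injective (congrFun h i) ▸ rfl
    rw [hT, Finset.sum_image (fun g1 _ g2 _ h => hinj h)]
    refine Finset.sum_congr rfl fun g _ => ?_
    rw [sum_perm_vdm α g]
    ring
  rw [key, Finset.mul_sum]
  have hterm : ∀ g : Equiv.Perm (Fin n),
      (∏ i : Fin n, ((i : ℕ).factorial : ℤ)) *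
        ((Nat.multinomial Finset.univ (fun i => ((g i : ℕ))) : ℤ) *
          ((∏ i, β i ^ ((g i : ℕ))) * (((Equiv.Perm.sign g : ℤˣ) : ℤ) * Vα)))
      = (m.factorial : ℤ) * Vα *
          (((Equiv.Perm.sign g : ℤˣ) : ℤ) * ∏ i, β i ^ ((g i : ℕ))) := by
    intro g
    have h1 : (∏ i : Fin n, ((g i : ℕ).factorial)) * Nat.multinomial Finset.univ (fun i => ((g i : ℕ)))
        = m.factorial := by
      rw [Nat.multinomial_spec]
      rw [hm]
      congr 1
      exact Equiv.sum_comp g (fun i => (i : ℕ))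
    have h2 : (∏ i : Fin n, ((i : ℕ).factorial : ℤ)) = ∏ i : Fin n, ((g i : ℕ).factorial : ℤ) :=
      (Equiv.prod_comp g (fun i => (((i : ℕ).factorial : ℤ)))).symm
    rw [h2]
    have h3 : (∏ i : Fin n, ((g i : ℕ).factorial : ℤ)) *
        (Nat.multinomial Finset.univ (fun i => ((g i : ℕ))) : ℤ) = (m.factorial : ℤ) := by
      push_cast [← h1]
      ring
    calc (∏ i : Fin n, ((g i : ℕ).factorial : ℤ)) *
        ((Nat.multinomial Finset.univ (fun i => ((g i : ℕ))) : ℤ) *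
          ((∏ i, β i ^ ((g i : ℕ))) * (((Equiv.Perm.sign g : ℤˣ) : ℤ) * Vα)))
        = ((∏ i : Fin n, ((g i : ℕ).factorial : ℤ)) *
            (Nat.multinomial Finset.univ (fun i => ((g i : ℕ))) : ℤ)) *
          ((∏ i, β i ^ ((g i : ℕ))) * (((Equiv.Perm.sign g : ℤˣ) : ℤ) * Vα)) := by ring
      _ = (m.factorial : ℤ) * Vα *
          (((Equiv.Perm.sign g : ℤˣ) : ℤ) * ∏ i, β i ^ ((g i : ℕ))) := by rw [h3]; ring
  rw [Finset.sum_congr rfl (fun g _ => hterm g), ← Finset.mul_sum, sum_perm_vdm' β]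
  ring

section
variable {p n : ℕ} (a b : Fin n → ZMod p)

noncomputable def Gdet : Polynomial ℤ :=
  Matrix.det (Matrix.of fun i j : Fin n => ((X : Polynomial ℤ) + 1) ^ ((a i).val * (b j).val))

lemma Gdet_def : Gdet a b =
    Matrix.det (Matrix.of fun i j : Fin n =>
      ((X : Polynomial ℤ) + 1) ^ ((a i).val * (b j).val)) := rfl

lemma Gdet_coeff (k : ℕ) : (Gdet a b).coeff k
    = ∑ σ : Equiv.Perm (Fin n), ((Equiv.Perm.sign σ : ℤˣ) : ℤ) *
        ((∑ i, (a (σ i)).val * (b i).val).choose k : ℤ) := by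
  rw [Gdet, Matrix.det_apply, Polynomial.finset_sum_coeff]
  refine Finset.sum_congr rfl fun σ _ => ?_
  have h1 : ∏ i, (Matrix.of fun i j : Fin n =>
        ((X : Polynomial ℤ) + 1) ^ ((a i).val * (b j).val)) (σ i) i
      = ((X : Polynomial ℤ) + 1) ^ (∑ i, (a (σ i)).val * (b i).val) := by
    rw [← Finset.prod_pow_eq_pow_sum]
    rfl
  rw [h1, Units.smul_def, Polynomial.coeff_smul, Polynomial.coeff_X_add_one_pow, smul_eq_mul]

lemma Gdet_fact_coeff (k : ℕ) :
    (k.factorial : ℤ) * (Gdet a b).coeff k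
    = ∑ j ∈ Finset.range (k+1), ((∏ t ∈ Finset.range k, (X - C (t : ℤ))).coeff j) *
        ∑ σ : Equiv.Perm (Fin n), ((Equiv.Perm.sign σ : ℤˣ) : ℤ) *
          (∑ i, ((a (σ i)).val : ℤ) * ((b i).val : ℤ)) ^ j := by
  rw [Gdet_coeff, Finset.mul_sum]
  set P : Polynomial ℤ := ∏ t ∈ Finset.range k, (X - C (t : ℤ)) with hP
  have hdeg : P.natDegree = k := by
    rw [hP, Polynomial.natDegree_prod _ _ (fun t _ => Polynomial.X_sub_C_ne_zero _)]
    simp only [Polynomial.natDegree_X_sub_C]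
    rw [Finset.sum_const, Finset.card_range, smul_eq_mul, mul_one]
  have hcast : ∀ σ : Equiv.Perm (Fin n),
      ((∑ i, (a (σ i)).val * (b i).val : ℕ) : ℤ) = ∑ i, ((a (σ i)).val : ℤ) * ((b i).val : ℤ) := by
    intro σ; push_cast; rfl
  have hstep : ∀ σ : Equiv.Perm (Fin n),
      (k.factorial : ℤ) * (((Equiv.Perm.sign σ : ℤˣ) : ℤ) *
        ((∑ i, (a (σ i)).val * (b i).val).choose k : ℤ))
      = ((Equiv.Perm.sign σ : ℤˣ) : ℤ) *
          ∑ j ∈ Finset.range (k+1), P.coeff j * (∑ i, ((a (σ i)).val : ℤ) * ((b i).val : ℤ)) ^ j := by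
    intro σ
    have he : P.eval ((∑ i, (a (σ i)).val * (b i).val : ℕ) : ℤ)
        = (k.factorial : ℤ) * ((∑ i, (a (σ i)).val * (b i).val).choose k : ℤ) := by
      rw [hP, Polynomial.eval_prod]
      simp only [Polynomial.eval_sub, Polynomial.eval_X, Polynomial.eval_C]
      exact prod_range_sub_eq _ k
    have heval : P.eval ((∑ i, (a (σ i)).val * (b i).val : ℕ) : ℤ)
        = ∑ j ∈ Finset.range (k+1), P.coeff j *
            (∑ i, ((a (σ i)).val : ℤ) * ((b i).val : ℤ)) ^ j := by
      conv_lhs => rw [Polynomial.eval_eq_sum_range]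
      rw [hdeg, hcast σ]
    rw [← heval, he]; ring
  rw [Finset.sum_congr rfl (fun σ _ => hstep σ)]
  simp_rw [Finset.mul_sum]
  rw [Finset.sum_comm]
  exact Finset.sum_congr rfl fun j _ => Finset.sum_congr rfl fun σ _ => by ring

lemma Gdet_coeff_lt (k : ℕ) (hk : k < ∑ i : Fin n, (i : ℕ)) : (Gdet a b).coeff k = 0 := by
  have h := Gdet_fact_coeff a b k
  have hz : ∀ j ∈ Finset.range (k+1),
      ((∏ t ∈ Finset.range k, (X - C (t : ℤ))).coeff j) *
        ∑ σ : Equiv.Perm (Fin n), ((Equiv.Perm.sign σ : ℤˣ) : ℤ) *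
          (∑ i, ((a (σ i)).val : ℤ) * ((b i).val : ℤ)) ^ j = 0 := by
    intro j hj
    rw [S_lt (fun i => (((a i).val : ℤ))) (fun i => (((b i).val : ℤ))) j (by rw [Finset.mem_range] at hj; omega), mul_zero]
  rw [Finset.sum_eq_zero hz] at h
  have : (k.factorial : ℤ) ≠ 0 := Int.natCast_ne_zero.2 (Nat.factorial_ne_zero k)
  exact (mul_eq_zero.1 h).resolve_left this

lemma Gdet_coeff_top :
    (∏ i : Fin n, ((i : ℕ).factorial : ℤ)) * (Gdet a b).coeff (∑ i : Fin n, (i : ℕ))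
    = (∏ i : Fin n, ∏ j ∈ Finset.Ioi i, (((a j).val : ℤ) - ((a i).val : ℤ))) *
      (∏ i : Fin n, ∏ j ∈ Finset.Ioi i, (((b j).val : ℤ) - ((b i).val : ℤ))) := by
  set m := ∑ i : Fin n, (i : ℕ) with hm
  have h := Gdet_fact_coeff a b m
  set P : Polynomial ℤ := ∏ t ∈ Finset.range m, (X - C (t : ℤ)) with hP
  have hdeg : P.natDegree = m := by
    rw [hP, Polynomial.natDegree_prod _ _ (fun t _ => Polynomial.X_sub_C_ne_zero _)]
    simp only [Polynomial.natDegree_X_sub_C]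
    rw [Finset.sum_const, Finset.card_range, smul_eq_mul, mul_one]
  have hmonic : P.Monic := monic_prod_of_monic _ _ fun t _ => monic_X_sub_C _
  have hsplit : ∑ j ∈ Finset.range (m+1), P.coeff j *
        ∑ σ : Equiv.Perm (Fin n), ((Equiv.Perm.sign σ : ℤˣ) : ℤ) *
          (∑ i, ((a (σ i)).val : ℤ) * ((b i).val : ℤ)) ^ j
      = ∑ σ : Equiv.Perm (Fin n), ((Equiv.Perm.sign σ : ℤˣ) : ℤ) *
          (∑ i, ((a (σ i)).val : ℤ) * ((b i).val : ℤ)) ^ m := by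
    rw [Finset.sum_range_succ]
    have h0 : ∀ j ∈ Finset.range m, P.coeff j *
        ∑ σ : Equiv.Perm (Fin n), ((Equiv.Perm.sign σ : ℤˣ) : ℤ) *
          (∑ i, ((a (σ i)).val : ℤ) * ((b i).val : ℤ)) ^ j = 0 := by
      intro j hj
      rw [S_lt (fun i => (((a i).val : ℤ))) (fun i => (((b i).val : ℤ))) j (Finset.mem_range.1 hj), mul_zero]
    rw [Finset.sum_eq_zero h0, zero_add]
    have : P.coeff m = 1 := by
      have := hmonic.coeff_natDegree
      rwa [hdeg] at this
    rw [this, one_mul]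
  rw [hsplit] at h
  have h2 := S_top (fun i => (((a i).val : ℤ))) (fun i => (((b i).val : ℤ)))
  rw [← hm] at h2
  have h3 : (m.factorial : ℤ) * ((∏ i : Fin n, ((i : ℕ).factorial : ℤ)) * (Gdet a b).coeff m)
      = (m.factorial : ℤ) * ((∏ i : Fin n, ∏ j ∈ Finset.Ioi i, (((a j).val : ℤ) - ((a i).val : ℤ))) *
      (∏ i : Fin n, ∏ j ∈ Finset.Ioi i, (((b j).val : ℤ) - ((b i).val : ℤ)))) := by
    calc (m.factorial : ℤ) * ((∏ i : Fin n, ((i : ℕ).factorial : ℤ)) * (Gdet a b).coeff m)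
        = (∏ i : Fin n, ((i : ℕ).factorial : ℤ)) * ((m.factorial : ℤ) * (Gdet a b).coeff m) := by ring
      _ = (∏ i : Fin n, ((i : ℕ).factorial : ℤ)) *
          ∑ σ : Equiv.Perm (Fin n), ((Equiv.Perm.sign σ : ℤˣ) : ℤ) *
            (∑ i, ((a (σ i)).val : ℤ) * ((b i).val : ℤ)) ^ m := by rw [h]
      _ = _ := by rw [h2]
  exact mul_left_cancel₀ (Int.natCast_ne_zero.2 (Nat.factorial_ne_zero m)) h3

end

section
variable {p n : ℕ}


lemma cheb_det_ne_zero (hp : p.Prime) (a b : Fin n → ZMod p)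
    (ha : Function.Injective a) (hb : Function.Injective b) :
    (Matrix.of fun i j : Fin n =>
      Complex.exp (2 * Real.pi * Complex.I / p) ^ ((a i).val * (b j).val)).det ≠ 0 := by
  intro hdet
  haveI : NeZero p := ⟨hp.ne_zero⟩
  haveI : Fact p.Prime := ⟨hp⟩
  set ζ : ℂ := Complex.exp (2 * Real.pi * Complex.I / p) with hζdef
  have hζ : IsPrimitiveRoot ζ p := Complex.isPrimitiveRoot_exp p hp.ne_zero
  set m := ∑ i : Fin n, (i : ℕ) with hm
  have hmap : (Matrix.of fun i j : Fin n => ζ ^ ((a i).val * (b j).val)).det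
      = (Polynomial.aeval (ζ - 1)) (Gdet a b) := by
    rw [Gdet_def]
    set f : Polynomial ℤ →+* ℂ :=
      ((Polynomial.aeval (ζ - 1) : Polynomial ℤ →ₐ[ℤ] ℂ) : Polynomial ℤ →+* ℂ) with hf
    set M : Matrix (Fin n) (Fin n) (Polynomial ℤ) :=
      Matrix.of fun i j : Fin n => ((X : Polynomial ℤ) + 1) ^ ((a i).val * (b j).val) with hMdef
    have h := (RingHom.map_det f M).symm
    have hM : (Matrix.of fun i j : Fin n => ζ ^ ((a i).val * (b j).val)) = M.map f := by
      ext i j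
      simp only [Matrix.map_apply, Matrix.of_apply, hMdef, hf, RingHom.coe_coe, map_pow, map_add,
        Polynomial.aeval_X, map_one, sub_add_cancel]
    rw [hM, show M.map ⇑f = f.mapMatrix M from rfl, h]
    rfl
  rw [hmap] at hdet
  obtain ⟨H0, hH0⟩ : (X : Polynomial ℤ) ^ m ∣ Gdet a b :=
    Polynomial.X_pow_dvd_iff.2 fun d hd => Gdet_coeff_lt a b d hd
  have hζne1 : ζ ≠ 1 := hζ.ne_one hp.one_lt
  have hH0val : (Polynomial.aeval (ζ - 1)) H0 = 0 := by
    rw [hH0] at hdet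
    rw [map_mul, map_pow, Polynomial.aeval_X] at hdet
    rcases mul_eq_zero.1 hdet with h | h
    · exact absurd h (pow_ne_zero m (sub_ne_zero.2 hζne1))
    · exact h
  set H1 : Polynomial ℤ := H0.comp (X - 1) with hH1
  have hH1val : (Polynomial.aeval ζ) H1 = 0 := by
    rw [hH1, Polynomial.aeval_comp]
    simpa using hH0val
  have hint : IsIntegral ℤ ζ := hζ.isIntegral hp.pos
  have hdvd : Polynomial.cyclotomic p ℤ ∣ H1 := by
    rw [Polynomial.cyclotomic_eq_minpoly hζ hp.pos]
    exact minpoly.isIntegrallyClosed_dvd hint hH1val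
  have hpdvd : (p : ℤ) ∣ H1.eval 1 := by
    have := Polynomial.eval_dvd (x := (1 : ℤ)) hdvd
    rwa [Polynomial.eval_one_cyclotomic_prime] at this
  have h1 : H1.eval 1 = H0.coeff 0 := by
    rw [hH1, Polynomial.eval_comp]
    simp [Polynomial.coeff_zero_eq_eval_zero]
  have h2 : (Gdet a b).coeff m = H0.coeff 0 := by
    rw [hH0]
    have := Polynomial.coeff_X_pow_mul H0 m 0
    rwa [zero_add] at this
  have hdvdc : (p : ℤ) ∣ (Gdet a b).coeff m := by rw [h2, ← h1]; exact hpdvd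
  have hdvdV : (p : ℤ) ∣
      (∏ i : Fin n, ∏ j ∈ Finset.Ioi i, (((a j).val : ℤ) - ((a i).val : ℤ))) *
      (∏ i : Fin n, ∏ j ∈ Finset.Ioi i, (((b j).val : ℤ) - ((b i).val : ℤ))) := by
    rw [← Gdet_coeff_top a b]
    exact Dvd.dvd.mul_left hdvdc _
  have hzero : ((((∏ i : Fin n, ∏ j ∈ Finset.Ioi i, (((a j).val : ℤ) - ((a i).val : ℤ))) *
      (∏ i : Fin n, ∏ j ∈ Finset.Ioi i, (((b j).val : ℤ) - ((b i).val : ℤ)))) : ℤ) : ZMod p) = 0 :=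
    (ZMod.intCast_zmod_eq_zero_iff_dvd _ p).2 hdvdV
  have hval : ∀ x : ZMod p, ((x.val : ℕ) : ZMod p) = x := fun x =>
    ZMod.natCast_rightInverse x
  rw [Int.cast_mul] at hzero
  have hcast : ∀ c : Fin n → ZMod p, (((∏ i : Fin n, ∏ j ∈ Finset.Ioi i,
        (((c j).val : ℤ) - ((c i).val : ℤ))) : ℤ) : ZMod p)
      = ∏ i : Fin n, ∏ j ∈ Finset.Ioi i, (c j - c i) := by
    intro c
    push_cast
    refine Finset.prod_congr rfl fun i _ => Finset.prod_congr rfl fun j _ => ?_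
    rw [hval, hval]
  rw [hcast a, hcast b] at hzero
  rcases mul_eq_zero.1 hzero with h | h
  all_goals {
    rw [Finset.prod_eq_zero_iff] at h
    obtain ⟨i, _, h⟩ := h
    rw [Finset.prod_eq_zero_iff] at h
    obtain ⟨j, hj, h⟩ := h
    have hij : i ≠ j := fun e => by subst e; exact absurd hj (by simp)
    have := sub_eq_zero.1 h
    first
    | exact hij (ha (by rw [this]) ).symm
    | exact hij (hb (by rw [this]) ).symm
  }

end

section
variable {p : ℕ} [NeZero p]

lemma exp_eq_pow (hp : 0 < p) (j k : ZMod p) :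
    Complex.exp (2 * (Real.pi : ℂ) * Complex.I * (j.val : ℂ) * (k.val : ℂ) / (p : ℂ))
    = Complex.exp (2 * Real.pi * Complex.I / p) ^ (j.val * k.val) := by
  rw [← Complex.exp_nat_mul]
  congr 1
  have : (p : ℂ) ≠ 0 := by
    simp only [ne_eq, Nat.cast_eq_zero]
    omega
  field_simp
  push_cast
  ring

lemma dft_eq (u : ZMod p → ℂ) (j : ZMod p) :
    dft p u j = (1 / (Real.sqrt p : ℂ)) * ∑ k : ZMod p,
      Complex.exp (2 * Real.pi * Complex.I / p) ^ (j.val * k.val) * u k := by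
  rw [dft]
  congr 1
  exact Finset.sum_congr rfl fun k _ => by
    rw [exp_eq_pow (Nat.pos_of_ne_zero (NeZero.ne p)) j k]

lemma sqrtp_ne : (1 / (Real.sqrt p : ℂ)) ≠ 0 := by
  have hppos : 0 < p := Nat.pos_of_ne_zero (NeZero.ne p)
  simp only [ne_eq, one_div, inv_eq_zero, Complex.ofReal_eq_zero]
  intro h
  have := Real.sqrt_pos.2 (by exact_mod_cast hppos : (0:ℝ) < p)
  linarith [this, h ▸ this]

lemma dft_zero_iff (u : ZMod p → ℂ) (j : ZMod p) :
    dft p u j = 0 ↔ ∑ k : ZMod p,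
      Complex.exp (2 * Real.pi * Complex.I / p) ^ (j.val * k.val) * u k = 0 := by
  rw [dft_eq, mul_eq_zero]
  constructor
  · rintro (h | h)
    · exact absurd h sqrtp_ne
    · exact h
  · exact fun h => Or.inr h

-- kernel form of Chebotarev
lemma cheb_ker (hp : p.Prime) (A B : Finset (ZMod p)) (hcard : B.card = A.card)
    (u : ZMod p → ℂ) (hu : ∀ i, u i ≠ 0 → i ∈ A)
    (hB : ∀ j ∈ B, dft p u j = 0) : u = 0 := by
  set n := A.card with hn
  set ζ : ℂ := Complex.exp (2 * Real.pi * Complex.I / p) with hζ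
  let a : Fin n → ZMod p := fun i => (A.equivFin.symm i : ZMod p)
  let b : Fin n → ZMod p := fun i => (B.equivFin.symm ((finCongr hcard).symm i) : ZMod p)
  have ha : Function.Injective a := fun i j h =>
    A.equivFin.symm.injective (Subtype.ext h)
  have hb : Function.Injective b := fun i j h => by
    have := B.equivFin.symm.injective (Subtype.ext h)
    exact (finCongr hcard).symm.injective this
  have hdet := cheb_det_ne_zero hp b a hb ha
  set M : Matrix (Fin n) (Fin n) ℂ := Matrix.of fun i j => ζ ^ ((b i).val * (a j).val) with hM
  let v : Fin n → ℂ := fun j => u (a j)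
  have hsum : ∀ c : ZMod p, ∑ j : Fin n, ζ ^ (c.val * (a j).val) * u (a j)
      = ∑ k : ZMod p, ζ ^ (c.val * k.val) * u k := by
    intro c
    have h0 : ∑ j : Fin n, ζ ^ (c.val * (a j).val) * u (a j)
        = ∑ x : A, ζ ^ (c.val * (x : ZMod p).val) * u (x : ZMod p) :=
      Equiv.sum_comp A.equivFin.symm
        (fun x : A => ζ ^ (c.val * (x : ZMod p).val) * u (x : ZMod p))
    have h1 : ∑ x : A, ζ ^ (c.val * (x : ZMod p).val) * u (x : ZMod p)
        = ∑ x ∈ A, ζ ^ (c.val * x.val) * u x :=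
      Finset.sum_coe_sort A (fun x => ζ ^ (c.val * x.val) * u x)
    rw [h0, h1]
    refine Finset.sum_subset (Finset.subset_univ A) fun k _ hk => ?_
    have : u k = 0 := by
      by_contra h
      exact hk (hu k h)
    rw [this, mul_zero]
  have hmv : M.mulVec v = 0 := by
    funext i
    have : M.mulVec v i = ∑ j : Fin n, ζ ^ ((b i).val * (a j).val) * u (a j) := by
      rw [Matrix.mulVec]
      rfl
    rw [this, hsum (b i)]
    have hbB : b i ∈ B := Finset.coe_mem _
    have := (dft_zero_iff u (b i)).1 (hB (b i) hbB)
    exact this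
  have hv : v = 0 := by
    by_contra hvne
    exact hdet ((Matrix.exists_mulVec_eq_zero_iff).1 ⟨v, hvne, hmv⟩)
  funext k
  by_contra hk
  have hkA := hu k hk
  have : k = a (A.equivFin ⟨k, hkA⟩) := by
    simp only [a, Equiv.symm_apply_apply]
  rw [this] at hk
  exact hk (congrFun hv _)

-- Tao's uncertainty principle
lemma uncert (hp : p.Prime) (u : ZMod p → ℂ) (hu : u ≠ 0) :
    p + 1 ≤ (Finset.univ.filter (fun i => u i ≠ 0)).card
      + (Finset.univ.filter (fun i => dft p u i ≠ 0)).card := by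
  by_contra hlt
  push_neg at hlt
  set A := Finset.univ.filter (fun i => u i ≠ 0) with hA
  set Z := Finset.univ.filter (fun i => dft p u i = 0) with hZ
  have hZcard : Z.card + (Finset.univ.filter (fun i => dft p u i ≠ 0)).card = p := by
    rw [hZ]
    have := Finset.card_filter_add_card_filter_not (s := (Finset.univ : Finset (ZMod p)))
      (p := fun i => dft p u i = 0)
    simpa [ZMod.card p] using this
  have hAcard : A.card ≤ Z.card := by omega
  obtain ⟨B, hBsub, hBcard⟩ := Finset.exists_subset_card_eq hAcard
  have := cheb_ker hp A B hBcard u (fun i hi => by simp [hA, hi]) (fun j hj => by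
    have := hBsub hj
    rw [hZ, Finset.mem_filter] at this
    exact this.2)
  exact hu this

end

section
variable {p : ℕ} [NeZero p]


lemma dft_smul (c : ℂ) (u : ZMod p → ℂ) (j : ZMod p) :
    dft p (c • u) j = c * dft p u j := by
  rw [dft, dft, Finset.mul_sum, Finset.mul_sum, Finset.mul_sum]
  exact Finset.sum_congr rfl fun k _ => by
    simp only [Pi.smul_apply, smul_eq_mul]; ring

lemma dft_sub (u v : ZMod p → ℂ) (j : ZMod p) :
    dft p (u - v) j = dft p u j - dft p v j := by
  rw [dft, dft, dft, ← mul_sub, ← Finset.sum_sub_distrib]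
  congr 1
  exact Finset.sum_congr rfl fun k _ => by
    simp only [Pi.sub_apply]; ring

lemma main_constr (hp : p.Prime) (A B : Finset (ZMod p)) (h0 : (0 : ZMod p) ∈ A)
    (hc : B.card + 1 = A.card) :
    ∃! u : ZMod p → ℂ, u 0 = 1 ∧ {i : ZMod p | u i ≠ 0} = ↑A ∧
      {i : ZMod p | dft p u i = 0} = ↑B := by
  set n := B.card with hn
  set ζ : ℂ := Complex.exp (2 * Real.pi * Complex.I / p) with hζ
  let e : Fin (n+1) ≃ A := (finCongr hc).trans A.equivFin.symm
  let a : Fin (n+1) → ZMod p := fun s => (e s : ZMod p)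
  let b : Fin n → ZMod p := fun r => (B.equivFin.symm r : ZMod p)
  have ha : Function.Injective a := fun i j h => e.injective (Subtype.ext h)
  have hb : Function.Injective b := fun i j h => B.equivFin.symm.injective (Subtype.ext h)
  have haA : ∀ s, a s ∈ A := fun s => (e s).2
  have hbB : ∀ r, b r ∈ B := fun r => (B.equivFin.symm r).2
  -- cofactors
  let minor : Fin (n+1) → Matrix (Fin n) (Fin n) ℂ := fun s =>
    Matrix.of fun r s' => ζ ^ ((b r).val * (a (s.succAbove s')).val)
  let w : Fin (n+1) → ℂ := fun s => (-1 : ℂ) ^ (s : ℕ) * (minor s).det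
  have hw : ∀ s, w s ≠ 0 := by
    intro s
    apply mul_ne_zero
    · exact pow_ne_zero _ (by norm_num)
    · exact cheb_det_ne_zero hp b (fun s' => a (s.succAbove s')) hb
        (ha.comp (Fin.succAbove_right_injective (p := s)))
  -- the bordered matrix
  let ρ : ZMod p → Fin (n+1) → ZMod p := fun c => Fin.cons c b
  let N : ZMod p → Matrix (Fin (n+1)) (Fin (n+1)) ℂ := fun c =>
    Matrix.of fun r s => ζ ^ ((ρ c r).val * (a s).val)
  have hkey : ∀ c : ZMod p, ∑ s, ζ ^ (c.val * (a s).val) * w s = (N c).det := by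
    intro c
    rw [Matrix.det_succ_row_zero]
    refine Finset.sum_congr rfl fun s _ => ?_
    have h1 : (N c).submatrix Fin.succ s.succAbove = minor s := by
      ext r s'
      simp only [Matrix.submatrix_apply, Matrix.of_apply, N, minor, ρ, Fin.cons_succ]
    have h2 : N c 0 s = ζ ^ (c.val * (a s).val) := by
      simp only [Matrix.of_apply, N, ρ, Fin.cons_zero]
    rw [h1, h2]
    ring
  -- the function u
  let u : ZMod p → ℂ := fun k =>
    if h : k ∈ A then w (e.symm ⟨k, h⟩) else 0
  have hua : ∀ s, u (a s) = w s := by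
    intro s
    have h : a s ∈ A := haA s
    have : e.symm ⟨a s, h⟩ = s := by
      rw [show (⟨a s, h⟩ : A) = e s from Subtype.ext rfl, Equiv.symm_apply_apply]
    simp only [u, dif_pos h, this]
  have huA : ∀ i, u i ≠ 0 → i ∈ A := by
    intro i hi
    by_contra h
    simp only [u, dif_neg h] at hi
    exact hi rfl
  have huA' : ∀ i ∈ A, u i ≠ 0 := by
    intro i hi
    have : i = a (e.symm ⟨i, hi⟩) := by
      simp only [a, Equiv.apply_symm_apply]
    rw [this, hua]
    exact hw _
  -- dft of u
  have hsum : ∀ c : ZMod p, ∑ k : ZMod p, ζ ^ (c.val * k.val) * u k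
      = ∑ s, ζ ^ (c.val * (a s).val) * w s := by
    intro c
    have h2 : ∑ k ∈ A, ζ ^ (c.val * k.val) * u k
        = ∑ x : A, ζ ^ (c.val * (x : ZMod p).val) * u (x : ZMod p) :=
      (Finset.sum_coe_sort A (fun x => ζ ^ (c.val * x.val) * u x)).symm
    have h3 : ∑ x : A, ζ ^ (c.val * (x : ZMod p).val) * u (x : ZMod p)
        = ∑ s, ζ ^ (c.val * (a s).val) * u (a s) := (Equiv.sum_comp e _).symm
    rw [← Finset.sum_subset (Finset.subset_univ A) (fun k _ hk => by
      have : u k = 0 := by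
        by_contra h
        exact hk (huA k h)
      rw [this, mul_zero]), h2, h3]
    exact Finset.sum_congr rfl fun s _ => by rw [hua]
  have hdftB : ∀ c ∈ B, dft p u c = 0 := by
    intro c hcB
    rw [dft_zero_iff, hsum, hkey]
    have hcb : c = b (B.equivFin ⟨c, hcB⟩) := by
      simp only [b, Equiv.symm_apply_apply]
    rw [hcb]
    refine Matrix.det_zero_of_row_eq (i := 0) (j := (B.equivFin ⟨c, hcB⟩).succ)
      (Fin.succ_ne_zero _).symm ?_
    funext s
    simp only [N, Matrix.of_apply, ρ, Fin.cons_zero, Fin.cons_succ]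
  have hdftnB : ∀ c ∉ B, dft p u c ≠ 0 := by
    intro c hcB hzero
    have hcard2 : (insert c B).card = A.card := by
      rw [Finset.card_insert_of_notMem hcB, ← hc]
    have := cheb_ker hp A (insert c B) hcard2 u huA (fun j hj => by
      rcases Finset.mem_insert.1 hj with rfl | hj
      · exact hzero
      · exact hdftB j hj)
    have := congrFun this (a 0)
    rw [hua] at this
    exact hw 0 this
  -- normalize
  have hu0 : u 0 ≠ 0 := huA' 0 h0
  refine ⟨(u 0)⁻¹ • u, ⟨?_, ?_, ?_⟩, ?_⟩
  · simp only [Pi.smul_apply, smul_eq_mul]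
    exact inv_mul_cancel₀ hu0
  · ext i
    simp only [Set.mem_setOf_eq, Pi.smul_apply, smul_eq_mul, Finset.coe_filter,
      Finset.mem_coe]
    rw [mul_ne_zero_iff]
    constructor
    · rintro ⟨-, h⟩
      exact huA i h
    · intro h
      exact ⟨inv_ne_zero hu0, huA' i h⟩
  · ext i
    simp only [Set.mem_setOf_eq, Finset.mem_coe]
    rw [dft_smul, mul_eq_zero]
    constructor
    · rintro (h | h)
      · exact absurd h (inv_ne_zero hu0)
      · by_contra hiB
        exact hdftnB i hiB h
    · intro h
      exact Or.inr (hdftB i h)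
  -- uniqueness
  · rintro v ⟨hv0, hvsupp, hvdft⟩
    have hx0 : ((u 0)⁻¹ • u) 0 = 1 := by
      simp only [Pi.smul_apply, smul_eq_mul]
      exact inv_mul_cancel₀ hu0
    have hxsupp : ∀ i, ((u 0)⁻¹ • u) i ≠ 0 ↔ i ∈ A := by
      intro i
      simp only [Pi.smul_apply, smul_eq_mul, mul_ne_zero_iff]
      constructor
      · rintro ⟨-, h⟩; exact huA i h
      · intro h; exact ⟨inv_ne_zero hu0, huA' i h⟩
    have hd : v - (u 0)⁻¹ • u = 0 := by
      refine cheb_ker hp (A.erase 0) B ?_ _ ?_ ?_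
      · rw [Finset.card_erase_of_mem h0, ← hc]
        omega
      · intro i hi
        rw [Finset.mem_erase]
        constructor
        · intro hie
          subst hie
          simp only [Pi.sub_apply, hv0, hx0, sub_self] at hi
          exact hi rfl
        · simp only [Pi.sub_apply] at hi
          by_contra hiA
          have h1 : v i = 0 := by
            by_contra h
            have : i ∈ {i : ZMod p | v i ≠ 0} := h
            rw [hvsupp] at this
            exact hiA this
          have h2 : ((u 0)⁻¹ • u) i = 0 := by
            by_contra h
            exact hiA ((hxsupp i).1 h)
          rw [h1, h2, sub_self] at hi
          exact hi rfl
      · intro j hj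
        rw [dft_sub, dft_smul]
        have h1 : dft p v j = 0 := by
          have : j ∈ {i : ZMod p | dft p v i = 0} := by
            rw [hvdft]; exact hj
          exact this
        rw [h1, hdftB j hj, mul_zero, sub_zero]
    have := sub_eq_zero.1 hd
    exact this
end

section
variable {p : ℕ} [NeZero p]


-- helper set lemmas
lemma set_help1 (s : Finset (ZMod p)) (f : ZMod p → ℂ) (hs : ∀ i, f i ≠ 0 ↔ i ∈ s)
    (h0 : (0 : ZMod p) ∈ s) : {i : ZMod p | f i ≠ 0} = ↑(s.erase 0) ∪ {0} := by
  ext i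
  simp only [Set.mem_setOf_eq, Set.mem_union, Finset.coe_erase, Set.mem_diff,
    Finset.mem_coe, Set.mem_singleton_iff, hs i]
  by_cases hi : i = 0
  · subst hi; simp [h0]
  · simp [hi]

lemma set_help2 (s t : Finset (ZMod p)) (g : ZMod p → ℂ) (ht : ∀ i, g i ≠ 0 ↔ i ∈ t)
    (huniv : s ∪ t = Finset.univ) (hint : s ∩ t = {0}) :
    {i : ZMod p | g i ≠ 0} = Set.univ \ ↑(s.erase 0) := by
  ext i
  simp only [Set.mem_setOf_eq, Set.mem_diff, Set.mem_univ, true_and, Finset.coe_erase,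
    Set.mem_diff, Finset.mem_coe, Set.mem_singleton_iff, ht i]
  constructor
  · intro hit ⟨his, hi0⟩
    have : i ∈ s ∩ t := Finset.mem_inter.2 ⟨his, hit⟩
    rw [hint, Finset.mem_singleton] at this
    exact hi0 this
  · intro h
    by_cases hi : i = 0
    · subst hi
      have : (0 : ZMod p) ∈ s ∩ t := by rw [hint]; exact Finset.mem_singleton_self 0
      exact (Finset.mem_inter.1 this).2
    · by_contra hit
      have : i ∈ s := by
        have : i ∈ s ∪ t := by rw [huniv]; exact Finset.mem_univ i
        rcases Finset.mem_union.1 this with h' | h'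
        · exact h'
        · exact absurd h' hit
      exact h ⟨this, hi⟩

lemma finset_cancel (M M' : Finset (ZMod p)) (h0 : (0 : ZMod p) ∉ M) (h0' : (0 : ZMod p) ∉ M')
    (h : (↑M : Set (ZMod p)) ∪ {0} = ↑M' ∪ {0}) : M = M' := by
  ext j
  by_cases hj : j = 0
  · subst hj; simp [h0, h0']
  · have := Set.ext_iff.1 h j
    simpa [hj, Finset.mem_coe] using this

theorem part_i (hp : p.Prime) (x y : ZMod p → ℂ) (hx0 : x 0 = 1) (hy0 : y 0 = 1)
    (hprod : ∀ j : ZMod p, j ≠ 0 → x j * y j = 0 ∧ dft p x j * dft p y (-j) = 0) :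
    ∃! KL : Finset (ZMod p) × Finset (ZMod p),
      (0 : ZMod p) ∉ KL.1 ∧ (0 : ZMod p) ∉ KL.2 ∧ KL.1.card + KL.2.card = p - 1 ∧
      {i : ZMod p | x i ≠ 0} = ↑KL.2 ∪ {0} ∧
      {i : ZMod p | dft p x i ≠ 0} = ↑KL.1 ∪ {0} ∧
      {i : ZMod p | y i ≠ 0} = Set.univ \ ↑KL.2 ∧
      {i : ZMod p | dft p y (-i) ≠ 0} = Set.univ \ ↑KL.1 := by
  classical
  set sx := Finset.univ.filter (fun i => x i ≠ 0) with hsx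
  set sy := Finset.univ.filter (fun i => y i ≠ 0) with hsy
  set sdx := Finset.univ.filter (fun i => dft p x i ≠ 0) with hsdx
  set sdy := Finset.univ.filter (fun i => dft p y i ≠ 0) with hsdy
  set sdy' := Finset.univ.filter (fun i => dft p y (-i) ≠ 0) with hsdy'
  have hmem : ∀ i, x i ≠ 0 ↔ i ∈ sx := fun i => by simp [hsx]
  have hmemy : ∀ i, y i ≠ 0 ↔ i ∈ sy := fun i => by simp [hsy]
  have hmemdx : ∀ i, dft p x i ≠ 0 ↔ i ∈ sdx := fun i => by simp [hsdx]
  have hmemdy' : ∀ i, dft p y (-i) ≠ 0 ↔ i ∈ sdy' := fun i => by simp [hsdy']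
  have h0x : (0 : ZMod p) ∈ sx := (hmem 0).1 (by rw [hx0]; exact one_ne_zero)
  have h0y : (0 : ZMod p) ∈ sy := (hmemy 0).1 (by rw [hy0]; exact one_ne_zero)
  have hxy : sx ∩ sy = {0} := by
    ext j
    simp only [Finset.mem_inter, Finset.mem_singleton, ← hmem, ← hmemy]
    constructor
    · rintro ⟨h1, h2⟩
      by_contra hj
      have := (hprod j hj).1
      rcases mul_eq_zero.1 this with h | h
      · exact h1 h
      · exact h2 h
    · rintro rfl
      exact ⟨(hmem 0).2 h0x, (hmemy 0).2 h0y⟩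
  have hdsub : sdx ∩ sdy' ⊆ {0} := by
    intro j hj
    rw [Finset.mem_inter, ← hmemdx, ← hmemdy'] at hj
    rw [Finset.mem_singleton]
    by_contra hjne
    rcases mul_eq_zero.1 (hprod j hjne).2 with h | h
    · exact hj.1 h
    · exact hj.2 h
  have hcardxy := Finset.card_union_add_card_inter sx sy
  have hcardd := Finset.card_union_add_card_inter sdx sdy'
  have hunivxy : (sx ∪ sy).card ≤ p := by
    have := Finset.card_le_card (Finset.subset_univ (sx ∪ sy))
    rwa [Finset.card_univ, ZMod.card p] at this
  have hunivd : (sdx ∪ sdy').card ≤ p := by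
    have := Finset.card_le_card (Finset.subset_univ (sdx ∪ sdy'))
    rwa [Finset.card_univ, ZMod.card p] at this
  have hintd : (sdx ∩ sdy').card ≤ 1 := by
    have := Finset.card_le_card hdsub
    simpa using this
  have hsdy'card : sdy'.card = sdy.card := by
    have himg : sdy' = sdy.image (fun t => -t) := by
      ext i
      simp only [hsdy', hsdy, Finset.mem_image, Finset.mem_filter, Finset.mem_univ, true_and]
      constructor
      · intro h
        exact ⟨-i, h, neg_neg i⟩
      · rintro ⟨t, ht, rfl⟩
        rwa [neg_neg]
    rw [himg, Finset.card_image_of_injective _ neg_injective]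
  have hxne : x ≠ 0 := fun h => by
    rw [h] at hx0
    simp at hx0
  have hyne : y ≠ 0 := fun h => by
    rw [h] at hy0
    simp at hy0
  have huncx := uncert hp x hxne
  have huncy := uncert hp y hyne
  rw [← hsx, ← hsdx] at huncx
  rw [← hsy, ← hsdy] at huncy
  have hxyint : (sx ∩ sy).card = 1 := by rw [hxy]; simp
  -- all inequalities are equalities
  have hsum1 : sx.card + sdx.card = p + 1 ∧ sy.card + sdy'.card = p + 1 ∧
      (sdx ∩ sdy').card = 1 ∧ (sdx ∪ sdy').card = p ∧ (sx ∪ sy).card = p := by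
    omega
  obtain ⟨heq1, heq2, heq3, heq4, heq5⟩ := hsum1
  have hdint : sdx ∩ sdy' = {0} :=
    (Finset.eq_of_subset_of_card_le hdsub (by simp [heq3])).symm.symm
  have h0dx : (0 : ZMod p) ∈ sdx := by
    have : (0 : ZMod p) ∈ sdx ∩ sdy' := by rw [hdint]; exact Finset.mem_singleton_self 0
    exact (Finset.mem_inter.1 this).1
  have hunionxy : sx ∪ sy = Finset.univ :=
    Finset.eq_univ_of_card _ (by rw [heq5, ZMod.card p])
  have huniond : sdx ∪ sdy' = Finset.univ :=
    Finset.eq_univ_of_card _ (by rw [heq4, ZMod.card p])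
  refine ⟨(sdx.erase 0, sx.erase 0), ⟨Finset.notMem_erase _ _, Finset.notMem_erase _ _, ?_,
    ?_, ?_, ?_, ?_⟩, ?_⟩
  · rw [Finset.card_erase_of_mem h0dx, Finset.card_erase_of_mem h0x]
    have hx1 : 1 ≤ sx.card := Finset.card_pos.2 ⟨0, h0x⟩
    have hdx1 : 1 ≤ sdx.card := Finset.card_pos.2 ⟨0, h0dx⟩
    omega
  · exact set_help1 sx x hmem h0x
  · exact set_help1 sdx (dft p x) hmemdx h0dx
  · exact set_help2 sx sy y hmemy hunionxy hxy
  · exact set_help2 sdx sdy' (fun i => dft p y (-i)) hmemdy' huniond hdint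
  · rintro ⟨K', L'⟩ ⟨hK'0, hL'0, _, hxs', hdxs', -, -⟩
    have hL : L' = sx.erase 0 := by
      apply finset_cancel _ _ hL'0 (Finset.notMem_erase _ _)
      rw [← hxs']
      exact set_help1 sx x hmem h0x
    have hK : K' = sdx.erase 0 := by
      apply finset_cancel _ _ hK'0 (Finset.notMem_erase _ _)
      rw [← hdxs']
      exact set_help1 sdx (dft p x) hmemdx h0dx
    simp [hL, hK]
end

section
variable {p : ℕ} [NeZero p]


theorem part_ii (hp : p.Prime) (K L : Finset (ZMod p)) (hK0 : (0 : ZMod p) ∉ K)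
    (hL0 : (0 : ZMod p) ∉ L) (hcard : K.card + L.card = p - 1) :
    (∃! xy : (ZMod p → ℂ) × (ZMod p → ℂ),
      xy.1 0 = 1 ∧ xy.2 0 = 1 ∧
      {i : ZMod p | xy.1 i ≠ 0} = ↑L ∪ {0} ∧
      {i : ZMod p | dft p xy.1 i ≠ 0} = ↑K ∪ {0} ∧
      {i : ZMod p | xy.2 i ≠ 0} = Set.univ \ ↑L ∧
      {i : ZMod p | dft p xy.2 (-i) ≠ 0} = Set.univ \ ↑K) ∧
    (∀ x y : ZMod p → ℂ, x 0 = 1 → y 0 = 1 →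
      {i : ZMod p | x i ≠ 0} = ↑L ∪ {0} →
      {i : ZMod p | dft p x i ≠ 0} = ↑K ∪ {0} →
      {i : ZMod p | y i ≠ 0} = Set.univ \ ↑L →
      {i : ZMod p | dft p y (-i) ≠ 0} = Set.univ \ ↑K →
      ∀ j : ZMod p, j ≠ 0 → x j * y j = 0 ∧ dft p x j * dft p y (-j) = 0) := by
  classical
  have hp2 : 2 ≤ p := hp.two_le
  have hcardK : K.card ≤ p - 1 := by omega
  have hcardL : L.card ≤ p - 1 := by omega
  -- x construction data
  set A₁ : Finset (ZMod p) := insert 0 L with hA₁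
  set B₁ : Finset (ZMod p) := (insert 0 K)ᶜ with hB₁
  have h0A₁ : (0 : ZMod p) ∈ A₁ := Finset.mem_insert_self 0 L
  have hcA₁ : A₁.card = L.card + 1 := Finset.card_insert_of_notMem hL0
  have hcB₁ : B₁.card = p - (K.card + 1) := by
    rw [hB₁, Finset.card_compl, Finset.card_insert_of_notMem hK0, ZMod.card p]
  have hc₁ : B₁.card + 1 = A₁.card := by rw [hcA₁, hcB₁]; omega
  -- y construction data
  set A₂ : Finset (ZMod p) := Lᶜ with hA₂
  set B₂ : Finset (ZMod p) := K.image (fun t => -t) with hB₂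
  have h0A₂ : (0 : ZMod p) ∈ A₂ := Finset.mem_compl.2 hL0
  have hcA₂ : A₂.card = p - L.card := by rw [hA₂, Finset.card_compl, ZMod.card p]
  have hcB₂ : B₂.card = K.card := Finset.card_image_of_injective _ neg_injective
  have hc₂ : B₂.card + 1 = A₂.card := by rw [hcA₂, hcB₂]; omega
  -- membership characterizations
  have hmemB₂ : ∀ j : ZMod p, j ∈ B₂ ↔ -j ∈ K := by
    intro j
    rw [hB₂, Finset.mem_image]
    constructor
    · rintro ⟨t, ht, rfl⟩
      rwa [neg_neg]
    · intro h
      exact ⟨-j, h, neg_neg j⟩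
  -- set conversions
  have hsetA₁ : (↑A₁ : Set (ZMod p)) = ↑L ∪ {0} := by
    rw [hA₁, Finset.coe_insert]
    ext i
    simp [or_comm]
  have hsetA₂ : (↑A₂ : Set (ZMod p)) = Set.univ \ ↑L := by
    rw [hA₂, Finset.coe_compl, Set.compl_eq_univ_diff]
  have hconv₁ : ∀ f : ZMod p → ℂ,
      ({i : ZMod p | dft p f i = 0} = ↑B₁) ↔ ({i : ZMod p | dft p f i ≠ 0} = ↑K ∪ {0}) := by
    intro f
    rw [hB₁]
    constructor
    · intro h
      have : {i : ZMod p | dft p f i ≠ 0} = {i : ZMod p | dft p f i = 0}ᶜ := by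
        ext i; simp
      rw [this, h, Finset.coe_compl, compl_compl, Finset.coe_insert]
      ext i; simp [or_comm]
    · intro h
      have : {i : ZMod p | dft p f i = 0} = {i : ZMod p | dft p f i ≠ 0}ᶜ := by
        ext i; simp
      rw [this, h, Finset.coe_compl, Finset.coe_insert]
      ext i; simp [or_comm]
  have hconv₂ : ∀ f : ZMod p → ℂ,
      ({i : ZMod p | dft p f i = 0} = ↑B₂) ↔
      ({i : ZMod p | dft p f (-i) ≠ 0} = Set.univ \ ↑K) := by
    intro f
    constructor
    · intro h
      ext i
      simp only [Set.mem_setOf_eq, Set.mem_diff, Set.mem_univ, true_and, Finset.mem_coe]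
      have hi := Set.ext_iff.1 h (-i)
      simp only [Set.mem_setOf_eq, Finset.mem_coe, hmemB₂, neg_neg] at hi
      constructor
      · intro hne hiK
        exact hne (hi.2 hiK)
      · intro hiK h0
        exact hiK (hi.1 h0)
    · intro h
      ext j
      simp only [Set.mem_setOf_eq, Finset.mem_coe, hmemB₂]
      have hj := Set.ext_iff.1 h (-j)
      simp only [Set.mem_setOf_eq, neg_neg, Set.mem_diff, Set.mem_univ, true_and,
        Finset.mem_coe] at hj
      constructor
      · intro h0
        by_contra hK
        exact (hj.2 hK) h0
      · intro hK
        by_contra h0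
        exact (hj.1 h0) hK
  obtain ⟨x, ⟨hx0, hxsupp, hxdft⟩, hxuniq⟩ := main_constr hp A₁ B₁ h0A₁ hc₁
  obtain ⟨y, ⟨hy0, hysupp, hydft⟩, hyuniq⟩ := main_constr hp A₂ B₂ h0A₂ hc₂
  constructor
  · refine ⟨(x, y), ⟨hx0, hy0, ?_, ?_, ?_, ?_⟩, ?_⟩
    · rw [hxsupp]; exact hsetA₁
    · exact (hconv₁ x).1 hxdft
    · rw [hysupp]; exact hsetA₂
    · exact (hconv₂ y).1 hydft
    · rintro ⟨x', y'⟩ ⟨hx'0, hy'0, h1, h2, h3, h4⟩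
      have hx' : x' = x := hxuniq x' ⟨hx'0, by rw [h1, hsetA₁], (hconv₁ x').2 h2⟩
      have hy' : y' = y := hyuniq y' ⟨hy'0, by rw [h3, hsetA₂], (hconv₂ y').2 h4⟩
      simp [hx', hy']
  · intro x' y' hx'0 hy'0 h1 h2 h3 h4 j hj
    constructor
    · by_contra h
      have h' := mul_ne_zero_iff.1 h
      have hjx : j ∈ ({i : ZMod p | x' i ≠ 0} : Set (ZMod p)) := h'.1
      have hjy : j ∈ ({i : ZMod p | y' i ≠ 0} : Set (ZMod p)) := h'.2
      rw [h1] at hjx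
      rw [h3] at hjy
      rcases hjx with hjL | hj0
      · exact hjy.2 hjL
      · exact hj hj0
    · by_contra h
      have h' := mul_ne_zero_iff.1 h
      have hjx : j ∈ ({i : ZMod p | dft p x' i ≠ 0} : Set (ZMod p)) := h'.1
      have hjy : j ∈ ({i : ZMod p | dft p y' (-i) ≠ 0} : Set (ZMod p)) := h'.2
      rw [h2] at hjx
      rw [h4] at hjy
      rcases hjx with hjK | hj0
      · exact hjy.2 hjK
      · exact hj hj0
end

/-- Classification of the zeros of `φ` (where `φ_j = x_j y_j`, `φ_{p-1+j} = x̂_j ŷ_{-j}`,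
`x = (1,x_1,…,x_{p-1})`, `y = (1,y_1,…,y_{p-1})`):
(i) every zero determines a unique pair `(K, L)` of subsets of `ℤ_p* = {1,…,p-1}` with
`|K| + |L| = p-1` such that `supp(x) = L ∪ {0}`, `supp(x̂) = K ∪ {0}`,
`supp(y) = ℤ_p \\ L`, `-supp(ŷ) = ℤ_p \\ K`;
(ii) conversely, every such pair `(K, L)` arises from exactly one pair `(x, y)` with
`x_0 = y_0 = 1` satisfying the four support conditions, and that pair is a zero of `φ`. -/
theorem phi_zeros_classification (p : ℕ) (hp : p.Prime) [NeZero p] :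
    (∀ x y : ZMod p → ℂ, x 0 = 1 → y 0 = 1 →
      (∀ j : ZMod p, j ≠ 0 → x j * y j = 0 ∧ dft p x j * dft p y (-j) = 0) →
      ∃! KL : Finset (ZMod p) × Finset (ZMod p),
        (0 : ZMod p) ∉ KL.1 ∧ (0 : ZMod p) ∉ KL.2 ∧ KL.1.card + KL.2.card = p - 1 ∧
        {i : ZMod p | x i ≠ 0} = ↑KL.2 ∪ {0} ∧
        {i : ZMod p | dft p x i ≠ 0} = ↑KL.1 ∪ {0} ∧
        {i : ZMod p | y i ≠ 0} = Set.univ \ ↑KL.2 ∧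
        {i : ZMod p | dft p y (-i) ≠ 0} = Set.univ \ ↑KL.1) ∧
    (∀ K L : Finset (ZMod p), (0 : ZMod p) ∉ K → (0 : ZMod p) ∉ L →
      K.card + L.card = p - 1 →
      (∃! xy : (ZMod p → ℂ) × (ZMod p → ℂ),
        xy.1 0 = 1 ∧ xy.2 0 = 1 ∧
        {i : ZMod p | xy.1 i ≠ 0} = ↑L ∪ {0} ∧
        {i : ZMod p | dft p xy.1 i ≠ 0} = ↑K ∪ {0} ∧
        {i : ZMod p | xy.2 i ≠ 0} = Set.univ \ ↑L ∧
        {i : ZMod p | dft p xy.2 (-i) ≠ 0} = Set.univ \ ↑K) ∧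
      (∀ x y : ZMod p → ℂ, x 0 = 1 → y 0 = 1 →
        {i : ZMod p | x i ≠ 0} = ↑L ∪ {0} →
        {i : ZMod p | dft p x i ≠ 0} = ↑K ∪ {0} →
        {i : ZMod p | y i ≠ 0} = Set.univ \ ↑L →
        {i : ZMod p | dft p y (-i) ≠ 0} = Set.univ \ ↑K →
        ∀ j : ZMod p, j ≠ 0 → x j * y j = 0 ∧ dft p x j * dft p y (-j) = 0)) := by
  constructor
  · exact fun x y hx0 hy0 h => part_i hp x y hx0 hy0 h
  · exact fun K L hK0 hL0 hc => part_ii hp K L hK0 hL0 hc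
end
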